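/- arXiv:1710.10651 — 3 statements merged into one kernel-verified Lean document; each statement's English description precedes it below -/
import Mathlib

section
/- Let I = ⟨x + y + z, x² + y² + z²⟩ ⊆ ℚ[x,y,z]. Then the line ℝ·(1,1,1) is contained in trop V(I); that is, for every λ ∈ ℝ and every nonzero h ∈ I, the minimum in trop(h)(λ, λ, λ) is achieved for at least two distinct exponents. -/
open MvPolynomial

/-- The tropical hypersurface of a polynomial `f` over a field with trivial valuation:
the set of `w ∈ ℝⁿ` at which the minimum of `w · u` over exponents `u` in the support
of `f` is attained for at least two distinct exponents. -/
def tropHypersurface {n : ℕ} {K : Type*} [Field K] (f : MvPolynomial (Fin n) K) :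
    Set (Fin n → ℝ) :=
  {w | ∃ u ∈ f.support, ∃ v ∈ f.support, u ≠ v ∧
    (∀ m ∈ f.support, (∑ i, w i * (u i : ℝ)) ≤ ∑ i, w i * (m i : ℝ)) ∧
    (∀ m ∈ f.support, (∑ i, w i * (v i : ℝ)) ≤ ∑ i, w i * (m i : ℝ))}

/-- The tropical variety of an ideal `I`: the intersection of the tropical hypersurfaces
of all nonzero elements of `I`. -/
def tropVariety {n : ℕ} {K : Type*} [Field K] (I : Ideal (MvPolynomial (Fin n) K)) :
    Set (Fin n → ℝ) :=
  {w | ∀ f ∈ I, f ≠ 0 → w ∈ tropHypersurface f}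

attribute [local instance] MvPolynomial.gradedAlgebra

noncomputable def zet : ℂ := Complex.exp (2 * Real.pi * Complex.I / 3)

lemma zet_prim : IsPrimitiveRoot zet 3 := Complex.isPrimitiveRoot_exp 3 (by norm_num)
lemma zet_sum : 1 + zet + zet ^ 2 = 0 := by
  have := zet_prim.geom_sum_eq_zero (by norm_num)
  simpa [Finset.sum_range_succ] using this
lemma zet_cube : zet ^ 3 = 1 := zet_prim.pow_eq_one
lemma zet_ne : zet ≠ 0 := zet_prim.ne_zero (by norm_num)

noncomputable def phi3 : MvPolynomial (Fin 3) ℚ →ₐ[ℚ] ℂ := aeval ![1, zet, zet ^ 2]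

lemma phi3_f : phi3 (X 0 + X 1 + X 2 : MvPolynomial (Fin 3) ℚ) = 0 := by
  simp [phi3]
  linear_combination zet_sum

lemma phi3_g : phi3 (X 0 ^ 2 + X 1 ^ 2 + X 2 ^ 2 : MvPolynomial (Fin 3) ℚ) = 0 := by
  simp [phi3]
  linear_combination zet_sum + zet * zet_cube

lemma phi3_mem {h : MvPolynomial (Fin 3) ℚ}
    (hh : h ∈ Ideal.span {(X 0 + X 1 + X 2 : MvPolynomial (Fin 3) ℚ),
      (X 0 ^ 2 + X 1 ^ 2 + X 2 ^ 2 : MvPolynomial (Fin 3) ℚ)}) : phi3 h = 0 := by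
  have : Ideal.span {(X 0 + X 1 + X 2 : MvPolynomial (Fin 3) ℚ),
      (X 0 ^ 2 + X 1 ^ 2 + X 2 ^ 2 : MvPolynomial (Fin 3) ℚ)} ≤ RingHom.ker phi3.toRingHom := by
    rw [Ideal.span_le]
    rintro p (rfl | rfl)
    · exact phi3_f
    · exact phi3_g
  exact this hh

lemma phi3_monomial_ne (u : Fin 3 →₀ ℕ) (c : ℚ) (hc : c ≠ 0) :
    phi3 (monomial u c) ≠ 0 := by
  rw [phi3, aeval_monomial]
  apply mul_ne_zero
  · simpa using hc
  · apply Finsupp.prod_ne_zero_iff.mpr  -- guess name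
    intro i _
    fin_cases i <;> simp [zet_ne]

lemma span_homog : (Ideal.span {(X 0 + X 1 + X 2 : MvPolynomial (Fin 3) ℚ),
      (X 0 ^ 2 + X 1 ^ 2 + X 2 ^ 2 : MvPolynomial (Fin 3) ℚ)}).IsHomogeneous
      (homogeneousSubmodule (Fin 3) ℚ) := by
  apply Ideal.homogeneous_span
  rintro p (rfl | rfl)
  · exact ⟨1, (mem_homogeneousSubmodule _ _).mpr
      (((isHomogeneous_X _ _).add (isHomogeneous_X _ _)).add (isHomogeneous_X _ _))⟩
  · exact ⟨2, (mem_homogeneousSubmodule _ _).mpr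
      (((isHomogeneous_X_pow _ _).add (isHomogeneous_X_pow _ _)).add (isHomogeneous_X_pow _ _))⟩

lemma comp_mem {h : MvPolynomial (Fin 3) ℚ} (d : ℕ)
    (hh : h ∈ Ideal.span {(X 0 + X 1 + X 2 : MvPolynomial (Fin 3) ℚ),
      (X 0 ^ 2 + X 1 ^ 2 + X 2 ^ 2 : MvPolynomial (Fin 3) ℚ)}) :
    homogeneousComponent d h ∈ Ideal.span {(X 0 + X 1 + X 2 : MvPolynomial (Fin 3) ℚ),
      (X 0 ^ 2 + X 1 ^ 2 + X 2 ^ 2 : MvPolynomial (Fin 3) ℚ)} := by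
  have := span_homog d hh
  rwa [← MvPolynomial.decomposition.decompose'_apply] 

lemma sum_lam (lam : ℝ) (u : Fin 3 →₀ ℕ) :
    ∑ i, lam * (u i : ℝ) = lam * ((Finsupp.degree u : ℕ) : ℝ) := by
  have hdeg : Finsupp.degree u = ∑ i : Fin 3, u i := by
    rw [Finsupp.degree_apply]
    exact Finset.sum_subset (Finset.subset_univ _)
      (fun i _ hi => Finsupp.notMem_support_iff.mp hi)
  rw [← Finset.mul_sum, hdeg]
  push_cast
  ring

theorem stmt4 (lam : ℝ) :
    (fun _ => lam : Fin 3 → ℝ) ∈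
      tropVariety (Ideal.span {(X 0 + X 1 + X 2 : MvPolynomial (Fin 3) ℚ),
        (X 0 ^ 2 + X 1 ^ 2 + X 2 ^ 2 : MvPolynomial (Fin 3) ℚ)}) := by
  intro h hh hne
  have hsne : h.support.Nonempty := support_nonempty.mpr hne
  obtain ⟨d, hdD, hdmin⟩ := (h.support.image Finsupp.degree).exists_min_image
    (fun n => lam * (n : ℝ)) (hsne.image _)
  set p := homogeneousComponent d h with hp
  have hpmem : ∀ u, u ∈ p.support ↔ u.degree = d ∧ u ∈ h.support := by
    intro u
    simp only [hp, mem_support_iff, coeff_homogeneousComponent, ite_ne_right_iff]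
  have hpI : p ∈ Ideal.span {(X 0 + X 1 + X 2 : MvPolynomial (Fin 3) ℚ),
      (X 0 ^ 2 + X 1 ^ 2 + X 2 ^ 2 : MvPolynomial (Fin 3) ℚ)} := comp_mem d hh
  obtain ⟨u0, hu0, hu0d⟩ := Finset.mem_image.mp hdD
  have hu0p : u0 ∈ p.support := (hpmem u0).mpr ⟨hu0d, hu0⟩
  have hex : ∃ v ∈ p.support, v ≠ u0 := by
    by_contra hcon
    push_neg at hcon
    have hsupp : p.support = {u0} :=
      Finset.eq_singleton_iff_unique_mem.mpr ⟨hu0p, fun v hv => hcon v hv⟩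
    obtain ⟨-, hps⟩ := Finsupp.support_eq_singleton.mp hsupp
    have hpm : p = monomial u0 (coeff u0 p) := by
      ext m
      rw [coeff_monomial]
      split_ifs with hm
      · rw [hm]
      · exact notMem_support_iff.mp (by rw [hsupp]; simpa [eq_comm] using hm)
    exact phi3_monomial_ne u0 (coeff u0 p) (mem_support_iff.mp hu0p)
      (hpm ▸ phi3_mem hpI)
  obtain ⟨v, hvp, hvne⟩ := hex
  obtain ⟨hvd, hvh⟩ := (hpmem v).mp hvp
  have key : ∀ u : Fin 3 →₀ ℕ, u.degree = d → ∀ m ∈ h.support,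
      (∑ i, (fun _ => lam : Fin 3 → ℝ) i * (u i : ℝ)) ≤
        ∑ i, (fun _ => lam : Fin 3 → ℝ) i * (m i : ℝ) := by
    intro u hud m hm
    have hmD : m.degree ∈ h.support.image Finsupp.degree := Finset.mem_image_of_mem _ hm
    have := hdmin _ hmD
    simp only
    rw [sum_lam, sum_lam, hud]
    exact this
  exact ⟨u0, hu0, v, hvh, fun e => hvne e.symm, key u0 hu0d, key v hvd⟩
end

section
/- Let K be a field with trivial valuation and let f, g ∈ K[x₁,…,x_n] be nonzero polynomials. Then for every w ∈ ℝⁿ, trop(fg)(w) = trop(f)(w) + trop(g)(w). -/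
open MvPolynomial

/-- The tropicalization of a nonzero polynomial `f` over a field with trivial valuation,
evaluated at `w`: the minimum of `w · u` over exponents `u` in the support of `f`. -/
noncomputable def tropicalization {n : ℕ} {K : Type*} [Field K]
    (f : MvPolynomial (Fin n) K) (hf : f ≠ 0) (w : Fin n → ℝ) : ℝ :=
  f.support.inf' (MvPolynomial.support_nonempty.mpr hf)
    (fun u => ∑ i, w i * (u i : ℝ))

private lemma val_add {n : ℕ} (w : Fin n → ℝ) (u v : Fin n →₀ ℕ) :
    (∑ i, w i * ((u + v) i : ℝ)) = (∑ i, w i * (u i : ℝ)) + ∑ i, w i * (v i : ℝ) := by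
  rw [← Finset.sum_add_distrib]
  refine Finset.sum_congr rfl fun i _ => ?_
  simp [mul_add]


private lemma min_min_eq {M : Type*} [AddCommMonoid M] [PartialOrder M] [IsOrderedCancelAddMonoid M] {a b x y : M}
    (h1 : a ≤ x) (h2 : b ≤ y) (h : x + y = a + b) : x = a ∧ y = b := by
  have hx : x ≤ a := by
    have : x + b ≤ x + y := add_le_add_right h2 x
    rw [h] at this
    exact le_of_add_le_add_right this
  refine ⟨le_antisymm hx h1, ?_⟩
  have := h
  rw [le_antisymm hx h1] at this
  exact add_left_cancel this

theorem stmt8 {n : ℕ} {K : Type*} [Field K]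
    (f g : MvPolynomial (Fin n) K) (hf : f ≠ 0) (hg : g ≠ 0) (w : Fin n → ℝ) :
    tropicalization (f * g) (mul_ne_zero hf hg) w =
      tropicalization f hf w + tropicalization g hg w := by
  classical
  set val : (Fin n →₀ ℕ) → ℝ := fun u => ∑ i, w i * (u i : ℝ) with hval
  set a := tropicalization f hf w with ha
  set b := tropicalization g hg w with hb
  -- the sets of minimizers
  set Sf := f.support.filter (fun u => val u = a) with hSf
  set Sg := g.support.filter (fun u => val u = b) with hSg
  have hSfne : Sf.Nonempty := by
    obtain ⟨u, hu, hu'⟩ := Finset.exists_mem_eq_inf' (MvPolynomial.support_nonempty.mpr hf)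
      (fun u => ∑ i, w i * (u i : ℝ))
    exact ⟨u, Finset.mem_filter.2 ⟨hu, hu'.symm⟩⟩
  have hSgne : Sg.Nonempty := by
    obtain ⟨u, hu, hu'⟩ := Finset.exists_mem_eq_inf' (MvPolynomial.support_nonempty.mpr hg)
      (fun u => ∑ i, w i * (u i : ℝ))
    exact ⟨u, Finset.mem_filter.2 ⟨hu, hu'.symm⟩⟩
  -- pick lexicographically minimal minimizers
  obtain ⟨u₀, hu₀, hu₀min⟩ := Finset.exists_min_image Sf (fun u => toLex u) hSfne
  obtain ⟨v₀, hv₀, hv₀min⟩ := Finset.exists_min_image Sg (fun u => toLex u) hSgne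
  have hu₀f : u₀ ∈ f.support := (Finset.mem_filter.1 hu₀).1
  have hv₀g : v₀ ∈ g.support := (Finset.mem_filter.1 hv₀).1
  have hu₀a : val u₀ = a := (Finset.mem_filter.1 hu₀).2
  have hv₀b : val v₀ = b := (Finset.mem_filter.1 hv₀).2
  have hfa : ∀ u ∈ f.support, a ≤ val u := fun u hu =>
    Finset.inf'_le _ hu
  have hgb : ∀ u ∈ g.support, b ≤ val u := fun u hu =>
    Finset.inf'_le _ hu
  -- the coefficient of u₀ + v₀ in f * g is coeff u₀ f * coeff v₀ g
  have hcoeff : MvPolynomial.coeff (u₀ + v₀) (f * g) =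
      MvPolynomial.coeff u₀ f * MvPolynomial.coeff v₀ g := by
    rw [MvPolynomial.coeff_mul]
    rw [Finset.sum_eq_single (u₀, v₀)]
    · intro p hp hne
      rcases Finset.HasAntidiagonal.mem_antidiagonal.1 hp with hsum
      by_contra hne0
      have hx : p.1 ∈ f.support := by
        rw [MvPolynomial.mem_support_iff]; intro h; exact hne0 (by simp [h])
      have hy : p.2 ∈ g.support := by
        rw [MvPolynomial.mem_support_iff]; intro h; exact hne0 (by simp [h])
      have h1 : a ≤ val p.1 := hfa _ hx
      have h2 : b ≤ val p.2 := hgb _ hy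
      have h3 : val p.1 + val p.2 = a + b := by
        rw [← val_add w p.1 p.2, hsum]
        calc val (u₀ + v₀) = val u₀ + val v₀ := val_add w u₀ v₀
          _ = a + b := by rw [hu₀a, hv₀b]
      have hva : val p.1 = a := by linarith
      have hvb : val p.2 = b := by linarith
      have hp1 : p.1 ∈ Sf := Finset.mem_filter.2 ⟨hx, hva⟩
      have hp2 : p.2 ∈ Sg := Finset.mem_filter.2 ⟨hy, hvb⟩
      have l1 : toLex u₀ ≤ toLex p.1 := hu₀min _ hp1
      have l2 : toLex v₀ ≤ toLex p.2 := hv₀min _ hp2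
      have leq : toLex p.1 + toLex p.2 = toLex u₀ + toLex v₀ := by
        rw [← toLex_add, ← toLex_add, hsum]
      obtain ⟨e1, e2⟩ := min_min_eq l1 l2 leq
      exact hne (Prod.ext (toLex.injective e1) (toLex.injective e2))
    · simp
  have hmem : (u₀ + v₀) ∈ (f * g).support := by
    rw [MvPolynomial.mem_support_iff, hcoeff]
    exact mul_ne_zero (MvPolynomial.mem_support_iff.1 hu₀f) (MvPolynomial.mem_support_iff.1 hv₀g)
  apply le_antisymm
  · calc tropicalization (f * g) (mul_ne_zero hf hg) w ≤ val (u₀ + v₀) :=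
          Finset.inf'_le _ hmem
      _ = val u₀ + val v₀ := val_add w u₀ v₀
      _ = a + b := by rw [hu₀a, hv₀b]
  · rw [tropicalization]
    apply Finset.le_inf'
    intro m hm
    have := MvPolynomial.support_mul f g hm
    rw [Finset.mem_add] at this
    obtain ⟨x, hx, y, hy, rfl⟩ := this
    have : a + b ≤ val x + val y := add_le_add (hfa _ hx) (hgb _ hy)
    calc a + b ≤ val x + val y := this
      _ = val (x + y) := (val_add w x y).symm
end

section
/- Let K be a field with trivial valuation and let f ∈ K[x₁,…,x_n] be a nonzero polynomial. Then {f} is a tropical basis of the principal ideal ⟨f⟩: trop V(⟨f⟩) = trop V(f), i.e., for every w ∈ ℝⁿ, if the minimum in trop(f)(w) is achieved at least twice, then for every nonzero g ∈ K[x₁,…,x_n] the minimum in trop(gf)(w) is also achieved at least twice. -/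
open MvPolynomial

private lemma coeff_sum_monomial {n : ℕ} {K : Type*} [Field K]
    (s : Finset (Fin n →₀ ℕ)) (c : (Fin n →₀ ℕ) → K) (b : Fin n →₀ ℕ) :
    coeff b (∑ a ∈ s, monomial a (c a)) = if b ∈ s then c b else 0 := by
  rw [coeff_sum]
  simp only [coeff_monomial]
  exact Finset.sum_ite_eq' s b c

/-- If `p ≠ 0` and `q` has at least two terms, then `p*q` has at least two terms. -/
private lemma two_terms_mul {n : ℕ} {K : Type*} [Field K]
    {p q : MvPolynomial (Fin n) K} (hp : p ≠ 0)
    {b b' : Fin n →₀ ℕ} (hb : b ∈ q.support) (hb' : b' ∈ q.support) (hbb : b ≠ b') :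
    ∃ u ∈ (p * q).support, ∃ v ∈ (p * q).support, u ≠ v := by
  have hq : q ≠ 0 := fun h => by simp [h] at hb
  have hps : p.support.Nonempty := support_nonempty.2 hp
  have hqs : q.support.Nonempty := support_nonempty.2 hq
  obtain ⟨a₀, ha₀, ha₀max⟩ := Finset.exists_max_image p.support (toLex : _ → Lex (Fin n →₀ ℕ)) hps
  obtain ⟨a₁, ha₁, ha₁min⟩ := Finset.exists_min_image p.support (toLex : _ → Lex (Fin n →₀ ℕ)) hps
  obtain ⟨b₀, hb₀, hb₀max⟩ := Finset.exists_max_image q.support (toLex : _ → Lex (Fin n →₀ ℕ)) hqs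
  obtain ⟨b₁, hb₁, hb₁min⟩ := Finset.exists_min_image q.support (toLex : _ → Lex (Fin n →₀ ℕ)) hqs
  have hlexadd : ∀ x y : Fin n →₀ ℕ, toLex (x + y) = toLex x + toLex y := fun _ _ => rfl
  -- max corner is in the support
  have hmax : coeff (a₀ + b₀) (p * q) = coeff a₀ p * coeff b₀ q := by
    rw [coeff_mul]
    refine Finset.sum_eq_single (a₀, b₀) ?_ ?_
    · rintro ⟨a, b⟩ hab hne
      rw [Finset.HasAntidiagonal.mem_antidiagonal] at hab
      by_contra h
      have ha : a ∈ p.support := by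
        rw [mem_support_iff]; intro h'; exact h (by simp [h'])
      have hbq : b ∈ q.support := by
        rw [mem_support_iff]; intro h'; exact h (by simp [h'])
      have h1 : toLex a ≤ toLex a₀ := ha₀max a ha
      have h2 : toLex b ≤ toLex b₀ := hb₀max b hbq
      have heq : toLex a + toLex b = toLex a₀ + toLex b₀ := by
        rw [← hlexadd, ← hlexadd, hab]
      rcases lt_or_eq_of_le h1 with h1 | h1
      · have : toLex a + toLex b < toLex a₀ + toLex b₀ :=
          add_lt_add_of_lt_of_le h1 h2
        exact absurd heq this.ne
      · rcases lt_or_eq_of_le h2 with h2 | h2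
        · have : toLex a + toLex b < toLex a₀ + toLex b₀ :=
            add_lt_add_of_le_of_lt h1.le h2
          exact absurd heq this.ne
        · have e1 : a = a₀ := toLex.injective h1
          have e2 : b = b₀ := toLex.injective h2
          exact hne (by rw [e1, e2])
    · intro h; simp at h
  have hmin : coeff (a₁ + b₁) (p * q) = coeff a₁ p * coeff b₁ q := by
    rw [coeff_mul]
    refine Finset.sum_eq_single (a₁, b₁) ?_ ?_
    · rintro ⟨a, b⟩ hab hne
      rw [Finset.HasAntidiagonal.mem_antidiagonal] at hab
      by_contra h
      have ha : a ∈ p.support := by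
        rw [mem_support_iff]; intro h'; exact h (by simp [h'])
      have hbq : b ∈ q.support := by
        rw [mem_support_iff]; intro h'; exact h (by simp [h'])
      have h1 : toLex a₁ ≤ toLex a := ha₁min a ha
      have h2 : toLex b₁ ≤ toLex b := hb₁min b hbq
      have heq : toLex a + toLex b = toLex a₁ + toLex b₁ := by
        rw [← hlexadd, ← hlexadd, hab]
      rcases lt_or_eq_of_le h1 with h1 | h1
      · have : toLex a₁ + toLex b₁ < toLex a + toLex b :=
          add_lt_add_of_lt_of_le h1 h2
        exact absurd heq this.ne'
      · rcases lt_or_eq_of_le h2 with h2 | h2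
        · have : toLex a₁ + toLex b₁ < toLex a + toLex b :=
            add_lt_add_of_le_of_lt h1.le h2
          exact absurd heq this.ne'
        · have e1 : a = a₁ := (toLex.injective h1).symm
          have e2 : b = b₁ := (toLex.injective h2).symm
          exact hne (by rw [e1, e2])
    · intro h; simp at h
  refine ⟨a₁ + b₁, ?_, a₀ + b₀, ?_, ?_⟩
  · rw [mem_support_iff, hmin]
    exact mul_ne_zero (mem_support_iff.1 ha₁) (mem_support_iff.1 hb₁)
  · rw [mem_support_iff, hmax]
    exact mul_ne_zero (mem_support_iff.1 ha₀) (mem_support_iff.1 hb₀)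
  · -- b₁ < b₀ since q has two distinct elements
    have hbne : toLex b₁ < toLex b₀ := by
      rcases lt_or_eq_of_le (le_trans (hb₁min b hb) (hb₀max b hb)) with h | h
      · exact h
      · have h1 : b₁ = b₀ := toLex.injective h
        have e1 : toLex b = toLex b₁ :=
          le_antisymm (h1 ▸ hb₀max b hb) (hb₁min b hb)
        have e2 : toLex b' = toLex b₁ :=
          le_antisymm (h1 ▸ hb₀max b' hb') (hb₁min b' hb')
        exact absurd (toLex.injective (e1.trans e2.symm)) hbb
    intro h
    have heq : toLex a₁ + toLex b₁ = toLex a₀ + toLex b₀ := by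
      rw [← hlexadd, ← hlexadd, h]
    have hlt : toLex a₁ + toLex b₁ < toLex a₀ + toLex b₀ :=
      add_lt_add_of_le_of_lt (ha₁min a₀ ha₀) hbne
    exact hlt.ne heq


private lemma trop_step {n : ℕ} {K : Type*} [Field K] {f : MvPolynomial (Fin n) K}
    {w : Fin n → ℝ} (hw : w ∈ tropHypersurface f)
    {g : MvPolynomial (Fin n) K} (hg : g ≠ 0) : w ∈ tropHypersurface (g * f) := by
  classical
  obtain ⟨u₀, hu₀, v₀, hv₀, huv, hminu, hminv⟩ := hw
  set W : (Fin n →₀ ℕ) → ℝ := fun u => ∑ i, w i * (u i : ℝ) with hWdef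
  have hWadd : ∀ a b, W (a + b) = W a + W b := by
    intro a b
    simp only [hWdef, Finsupp.coe_add, Pi.add_apply, Nat.cast_add, mul_add]
    rw [Finset.sum_add_distrib]
  have hfuv : W v₀ = W u₀ := le_antisymm (hminv u₀ hu₀) (hminu v₀ hv₀)
  obtain ⟨a₀, ha₀, ha₀min⟩ := Finset.exists_min_image g.support W (support_nonempty.2 hg)
  set mg := W a₀ with hmg
  set mf := W u₀ with hmf
  set sp := g.support.filter (fun a => W a = mg) with hsp
  set sq := f.support.filter (fun b => W b = mf) with hsq
  set p : MvPolynomial (Fin n) K := ∑ a ∈ sp, monomial a (coeff a g) with hpdef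
  set q : MvPolynomial (Fin n) K := ∑ b ∈ sq, monomial b (coeff b f) with hqdef
  have hcp : ∀ b, coeff b p = if b ∈ sp then coeff b g else 0 := fun b =>
    coeff_sum_monomial sp (fun a => coeff a g) b
  have hcq : ∀ b, coeff b q = if b ∈ sq then coeff b f else 0 := fun b =>
    coeff_sum_monomial sq (fun a => coeff a f) b
  have hp0 : p ≠ 0 := by
    intro h
    have hmem : a₀ ∈ sp := by rw [hsp]; exact Finset.mem_filter.2 ⟨ha₀, rfl⟩
    have : coeff a₀ p = coeff a₀ g := by rw [hcp a₀, if_pos hmem]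
    rw [h, coeff_zero] at this
    exact (mem_support_iff.1 ha₀) this.symm
  have hqu : u₀ ∈ q.support := by
    have hmem : u₀ ∈ sq := by rw [hsq]; exact Finset.mem_filter.2 ⟨hu₀, rfl⟩
    rw [mem_support_iff, hcq u₀, if_pos hmem]
    exact mem_support_iff.1 hu₀
  have hqv : v₀ ∈ q.support := by
    have hmem : v₀ ∈ sq := by rw [hsq]; exact Finset.mem_filter.2 ⟨hv₀, hfuv⟩
    rw [mem_support_iff, hcq v₀, if_pos hmem]
    exact mem_support_iff.1 hv₀
  obtain ⟨u, hu, v, hv, huvne⟩ := two_terms_mul hp0 hqu hqv huv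
  -- every element of supp (p*q) has weight mg + mf
  have hWpq : ∀ x ∈ (p * q).support, W x = mg + mf := by
    intro x hx
    obtain ⟨a, ha, b, hb, hab⟩ := Finset.mem_add.1 (support_mul p q hx)
    have ha' : a ∈ sp := by
      by_contra h
      exact (mem_support_iff.1 ha) (by rw [hcp a, if_neg h])
    have hb' : b ∈ sq := by
      by_contra h
      exact (mem_support_iff.1 hb) (by rw [hcq b, if_neg h])
    rw [← hab, hWadd, (Finset.mem_filter.1 ha').2, (Finset.mem_filter.1 hb').2]
  -- coefficients agree on minimal-weight exponents
  have hcoe : ∀ x : Fin n →₀ ℕ, W x = mg + mf → coeff x (p * q) = coeff x (g * f) := by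
    intro x hx
    rw [coeff_mul, coeff_mul]
    refine Finset.sum_congr rfl ?_
    rintro ⟨a, b⟩ hab
    rw [Finset.HasAntidiagonal.mem_antidiagonal] at hab
    by_cases ha : a ∈ g.support
    · by_cases hb : b ∈ f.support
      · have h1 : mg ≤ W a := ha₀min a ha
        have h2 : mf ≤ W b := hminu b hb
        have h3 : W a + W b = mg + mf := by rw [← hWadd, hab, hx]
        have h4 : W a = mg := by linarith
        have h5 : W b = mf := by linarith
        have hma : a ∈ sp := by rw [hsp]; exact Finset.mem_filter.2 ⟨ha, h4⟩
        have hmb : b ∈ sq := by rw [hsq]; exact Finset.mem_filter.2 ⟨hb, h5⟩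
        rw [hcp a, if_pos hma, hcq b, if_pos hmb]
      · have hb0 : coeff b f = 0 := notMem_support_iff.1 hb
        have hb0' : coeff b q = 0 := by
          rw [hcq b]
          split <;> simp [hb0]
        simp [hb0, hb0']
    · have ha0 : coeff a g = 0 := notMem_support_iff.1 ha
      have ha0' : coeff a p = 0 := by
        rw [hcp a]
        split <;> simp [ha0]
      simp [ha0, ha0']
  -- every exponent of g*f has weight at least mg + mf
  have hlow : ∀ m ∈ (g * f).support, mg + mf ≤ W m := by
    intro m hm
    have h0 : coeff m (g * f) ≠ 0 := mem_support_iff.1 hm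
    rw [coeff_mul] at h0
    obtain ⟨⟨a, b⟩, hab, hne0⟩ := Finset.exists_ne_zero_of_sum_ne_zero h0
    rw [Finset.HasAntidiagonal.mem_antidiagonal] at hab
    have ha : a ∈ g.support := mem_support_iff.2 (fun h => hne0 (by simp [h]))
    have hb : b ∈ f.support := mem_support_iff.2 (fun h => hne0 (by simp [h]))
    have h1 : mg ≤ W a := ha₀min a ha
    have h2 : mf ≤ W b := hminu b hb
    have h3 : W m = W a + W b := by rw [← hWadd, hab]
    linarith
  have hum : u ∈ (g * f).support := by
    rw [mem_support_iff, ← hcoe u (hWpq u hu)]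
    exact mem_support_iff.1 hu
  have hvm : v ∈ (g * f).support := by
    rw [mem_support_iff, ← hcoe v (hWpq v hv)]
    exact mem_support_iff.1 hv
  refine ⟨u, hum, v, hvm, huvne, ?_, ?_⟩
  · intro m hm
    have := hlow m hm
    have hu' := hWpq u hu
    show W u ≤ W m
    linarith
  · intro m hm
    have := hlow m hm
    have hv' := hWpq v hv
    show W v ≤ W m
    linarith

theorem stmt9 {n : ℕ} {K : Type*} [Field K] (f : MvPolynomial (Fin n) K) (hf : f ≠ 0) :
    (tropVariety (Ideal.span {f}) = tropHypersurface f) ∧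
    (∀ w ∈ tropHypersurface f, ∀ g : MvPolynomial (Fin n) K, g ≠ 0 →
      w ∈ tropHypersurface (g * f)) := by
  constructor
  · ext w
    constructor
    · intro hw
      exact hw f (Ideal.mem_span_singleton_self f) hf
    · intro hw h hmem hne
      obtain ⟨g, hg⟩ := Ideal.mem_span_singleton'.1 hmem
      have hg0 : g ≠ 0 := by
        intro h0
        rw [h0, zero_mul] at hg
        exact hne hg.symm
      rw [← hg]
      exact trop_step hw hg0
  · intro w hw g hg
    exact trop_step hw hg
end
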